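/- arXiv:1807.01254 — 3 statements merged into one kernel-verified Lean document; each statement's English description precedes it below -/
import Mathlib

section
/- Let γ satisfy 0 ≤ γ ≤ 1, let s ≥ 0 be a real number, and let k₁, k₂, k₃ be integers. Then |(e^{2is k₁(k₁+k₂+k₃)} − 1)(e^{2is k₂ k₃} − 1)| ≤ 2 s^{2γ} Σ |k_ℓ² k_j k_m|^γ, where the sum runs over all six ordered triples (ℓ, j, m) of pairwise distinct indices from {1, 2, 3}. -/
open Real Complex

-- subadditivity of rpow on nonneg reals for 0 ≤ p ≤ 1
lemma my_rpow_add_le (a b p : ℝ) (ha : 0 ≤ a) (hb : 0 ≤ b) (hp : 0 ≤ p) (hp1 : p ≤ 1) :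
    (a + b) ^ p ≤ a ^ p + b ^ p := by
  lift a to NNReal using ha
  lift b to NNReal using hb
  exact_mod_cast NNReal.rpow_add_le_add_rpow a b hp hp1

-- |e^{iθ} - 1| ≤ |θ|
lemma my_exp_sub_one_le (θ : ℝ) :
    ‖Complex.exp (θ * Complex.I) - 1‖ ≤ |θ| := by
  have h1 : Complex.exp (θ * Complex.I) - 1 =
      (Real.cos θ - 1 : ℝ) + (Real.sin θ : ℝ) * Complex.I := by
    rw [Complex.exp_mul_I]
    push_cast
    ring
  rw [h1]
  rw [Complex.norm_def, Complex.normSq_add_mul_I]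
  rw [show (Real.cos θ - 1) ^ 2 + Real.sin θ ^ 2 = 2 - 2 * Real.cos θ by
    have := Real.sin_sq_add_cos_sq θ; nlinarith]
  have hcos : Real.cos θ = 1 - 2 * Real.sin (θ / 2) ^ 2 := by
    have h := Real.cos_two_mul (θ / 2)
    have h2 := Real.sin_sq_add_cos_sq (θ / 2)
    rw [show 2 * (θ / 2) = θ by ring] at h
    nlinarith
  have hsin : Real.sin (θ / 2) ^ 2 ≤ (θ / 2) ^ 2 := Real.sin_sq_le_sq
  have h2 : 2 - 2 * Real.cos θ ≤ θ ^ 2 := by rw [hcos]; nlinarith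
  calc Real.sqrt (2 - 2 * Real.cos θ) ≤ Real.sqrt (θ ^ 2) := Real.sqrt_le_sqrt h2
    _ = |θ| := Real.sqrt_sq_eq_abs θ

lemma my_exp_sub_one_le_two (θ : ℝ) :
    ‖Complex.exp (θ * Complex.I) - 1‖ ≤ 2 := by
  calc ‖Complex.exp (θ * Complex.I) - 1‖
      ≤ ‖Complex.exp (θ * Complex.I)‖ + ‖(1:ℂ)‖ := by
        simpa using norm_sub_le (Complex.exp (θ * Complex.I)) 1
    _ = 2 := by rw [Complex.norm_exp_ofReal_mul_I]; norm_num

lemma my_key (γ θ : ℝ) (h0 : 0 ≤ γ) (h1 : γ ≤ 1) :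
    ‖Complex.exp (θ * Complex.I) - 1‖ ≤ 2 ^ (1 - γ) * |θ| ^ γ := by
  rcases le_total |θ| 2 with h | h
  · calc ‖Complex.exp (θ * Complex.I) - 1‖ ≤ |θ| := my_exp_sub_one_le θ
      _ = |θ| ^ (1 - γ) * |θ| ^ γ := by
          rw [← Real.rpow_add' (abs_nonneg θ) (by norm_num)]
          simp
      _ ≤ 2 ^ (1 - γ) * |θ| ^ γ :=
          mul_le_mul_of_nonneg_right
            (Real.rpow_le_rpow (abs_nonneg θ) h (by linarith))
            (Real.rpow_nonneg (abs_nonneg θ) γ)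
  · calc ‖Complex.exp (θ * Complex.I) - 1‖ ≤ 2 := my_exp_sub_one_le_two θ
      _ = 2 ^ (1 - γ) * 2 ^ γ := by
          rw [← Real.rpow_add (by norm_num)]; simp
      _ ≤ 2 ^ (1 - γ) * |θ| ^ γ :=
          mul_le_mul_of_nonneg_left
            (Real.rpow_le_rpow (by norm_num) h h0)
            (by positivity)

theorem stmt4 (γ s : ℝ) (h0 : 0 ≤ γ) (h1 : γ ≤ 1) (hs : 0 ≤ s) (k₁ k₂ k₃ : ℤ) :
    ‖(Complex.exp (2 * Complex.I * s * ((k₁ * (k₁ + k₂ + k₃) : ℤ) : ℂ)) - 1) *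
        (Complex.exp (2 * Complex.I * s * ((k₂ * k₃ : ℤ) : ℂ)) - 1)‖
      ≤ 2 * s ^ (2 * γ) *
        ((|(k₁ : ℝ)| ^ 2 * |(k₂ : ℝ)| * |(k₃ : ℝ)|) ^ γ
          + (|(k₁ : ℝ)| ^ 2 * |(k₃ : ℝ)| * |(k₂ : ℝ)|) ^ γ
          + (|(k₂ : ℝ)| ^ 2 * |(k₁ : ℝ)| * |(k₃ : ℝ)|) ^ γ
          + (|(k₂ : ℝ)| ^ 2 * |(k₃ : ℝ)| * |(k₁ : ℝ)|) ^ γ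
          + (|(k₃ : ℝ)| ^ 2 * |(k₁ : ℝ)| * |(k₂ : ℝ)|) ^ γ
          + (|(k₃ : ℝ)| ^ 2 * |(k₂ : ℝ)| * |(k₁ : ℝ)|) ^ γ) := by
  set θ₁ : ℝ := 2 * s * ((k₁ * (k₁ + k₂ + k₃) : ℤ) : ℝ) with hθ₁
  set θ₂ : ℝ := 2 * s * ((k₂ * k₃ : ℤ) : ℝ) with hθ₂
  set A : ℝ := |(k₁ : ℝ)| ^ 2 * |(k₂ : ℝ)| * |(k₃ : ℝ)| with hA
  set B : ℝ := |(k₂ : ℝ)| ^ 2 * |(k₁ : ℝ)| * |(k₃ : ℝ)| with hB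
  set C : ℝ := |(k₃ : ℝ)| ^ 2 * |(k₁ : ℝ)| * |(k₂ : ℝ)| with hC
  have hA0 : 0 ≤ A := by positivity
  have hB0 : 0 ≤ B := by positivity
  have hC0 : 0 ≤ C := by positivity
  have e1 : 2 * Complex.I * s * ((k₁ * (k₁ + k₂ + k₃) : ℤ) : ℂ) = (θ₁ : ℂ) * Complex.I := by
    rw [hθ₁]; push_cast; ring
  have e2 : 2 * Complex.I * s * ((k₂ * k₃ : ℤ) : ℂ) = (θ₂ : ℂ) * Complex.I := by
    rw [hθ₂]; push_cast; ring
  rw [e1, e2, norm_mul]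
  have key : |θ₁| * |θ₂| ≤ 4 * s ^ 2 * (A + B + C) := by
    rw [hθ₁, hθ₂, hA, hB, hC]
    rw [abs_mul, abs_mul, abs_mul, abs_mul]
    push_cast
    rw [abs_mul, abs_mul]
    have habs : |(k₁ : ℝ) + k₂ + k₃| ≤ |(k₁ : ℝ)| + |(k₂ : ℝ)| + |(k₃ : ℝ)| :=
      (abs_add_le _ _).trans (by gcongr; exact abs_add_le _ _)
    have h3 : |(k₁ : ℝ)| * |(k₁ : ℝ) + k₂ + k₃| ≤
        |(k₁ : ℝ)| * (|(k₁ : ℝ)| + |(k₂ : ℝ)| + |(k₃ : ℝ)|) :=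
      mul_le_mul_of_nonneg_left habs (abs_nonneg _)
    have h4 := mul_le_mul_of_nonneg_right h3
      (mul_nonneg (abs_nonneg (k₂ : ℝ)) (abs_nonneg (k₃ : ℝ)))
    have h5 := mul_le_mul_of_nonneg_left h4 (by positivity : (0:ℝ) ≤ 4 * s ^ 2)
    rw [_root_.abs_of_nonneg hs, show |(2:ℝ)| = 2 by norm_num]
    nlinarith [h5]
  have S0 : 0 ≤ A ^ γ + B ^ γ + C ^ γ := by positivity
  calc ‖Complex.exp ((θ₁ : ℂ) * Complex.I) - 1‖ *
        ‖Complex.exp ((θ₂ : ℂ) * Complex.I) - 1‖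
      ≤ (2 ^ (1 - γ) * |θ₁| ^ γ) * (2 ^ (1 - γ) * |θ₂| ^ γ) :=
        mul_le_mul (my_key γ θ₁ h0 h1) (my_key γ θ₂ h0 h1)
          (norm_nonneg _) (by positivity)
    _ = 2 ^ (2 - 2 * γ) * (|θ₁| * |θ₂|) ^ γ := by
        rw [Real.mul_rpow (abs_nonneg _) (abs_nonneg _),
          show (2:ℝ) ^ (2 - 2 * γ) = 2 ^ (1 - γ) * 2 ^ (1 - γ) by
            rw [← Real.rpow_add (by norm_num : (0:ℝ) < 2)]; ring_nf]
        ring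
    _ ≤ 2 ^ (2 - 2 * γ) * (4 * s ^ 2 * (A + B + C)) ^ γ :=
        mul_le_mul_of_nonneg_left
          (Real.rpow_le_rpow (mul_nonneg (abs_nonneg _) (abs_nonneg _)) key h0)
          (by positivity)
    _ = 2 ^ (2 - 2 * γ) * ((4 * s ^ 2) ^ γ * (A + B + C) ^ γ) := by
        rw [Real.mul_rpow (by positivity) (by positivity)]
    _ ≤ 2 ^ (2 - 2 * γ) * ((4 * s ^ 2) ^ γ * (A ^ γ + B ^ γ + C ^ γ)) := by
        refine mul_le_mul_of_nonneg_left (mul_le_mul_of_nonneg_left ?_ (by positivity))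
          (by positivity)
        calc (A + B + C) ^ γ ≤ (A + B) ^ γ + C ^ γ :=
              my_rpow_add_le _ _ _ (by positivity) hC0 h0 h1
          _ ≤ A ^ γ + B ^ γ + C ^ γ := by
              have := my_rpow_add_le A B γ hA0 hB0 h0 h1
              linarith
    _ = 4 * s ^ (2 * γ) * (A ^ γ + B ^ γ + C ^ γ) := by
        have h4γ : (4 * s ^ 2 : ℝ) ^ γ = 2 ^ (2 * γ) * s ^ (2 * γ) := by
          rw [Real.mul_rpow (by norm_num) (by positivity),
            show (4:ℝ) = 2 ^ ((2:ℕ):ℝ) by rw [Real.rpow_natCast]; norm_num,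
            ← Real.rpow_mul (by norm_num : (0:ℝ) ≤ 2),
            ← Real.rpow_natCast s 2, ← Real.rpow_mul hs]
          norm_num
        have h2γ : (2:ℝ) ^ (2 - 2 * γ) * 2 ^ (2 * γ) = 4 := by
          rw [← Real.rpow_add (by norm_num : (0:ℝ) < 2),
            show (2 - 2 * γ + 2 * γ : ℝ) = ((2:ℕ):ℝ) by push_cast; ring,
            Real.rpow_natCast]
          norm_num
        rw [h4γ, show (2:ℝ) ^ (2 - 2 * γ) * (2 ^ (2 * γ) * s ^ (2 * γ) *
            (A ^ γ + B ^ γ + C ^ γ)) = (2 ^ (2 - 2 * γ) * 2 ^ (2 * γ)) *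
            (s ^ (2 * γ) * (A ^ γ + B ^ γ + C ^ γ)) by ring, h2γ]
        ring
    _ = _ := by
        rw [hA, hB, hC]
        ring_nf
end

section
/- Let r > 1/2 and let γ satisfy 0 ≤ γ ≤ 1. There exists a constant c > 0, depending only on r and γ, with the following property: for every τ ≥ 0 and every sequence v : ℤ → ℂ with ‖v‖_{r+2γ} < ∞, the sequence R : ℤ → ℂ defined by R_k = Σ_{k₁+k₂+k₃=k} ( ∫₀^τ (e^{2is k₁ k} − 1)(e^{2is k₂ k₃} − 1) ds ) · conj(v_{k₁}) v_{k₂} v_{k₃} (the inner sum over all triples (k₁,k₂,k₃) ∈ ℤ³ with k₁+k₂+k₃ = k converges absolutely) satisfies ‖R‖_r ≤ c τ^{1+2γ} ‖v‖_{r+γ}² ‖v‖_{r+2γ}. -/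
open MeasureTheory

/-! ### Auxiliary lemmas -/

lemma aux_exp_bound (x : ℝ) :
    norm (Complex.exp (x * Complex.I) - 1) ≤ min 2 |x| := by
  have habs : norm (Complex.exp (x * Complex.I) - 1) = 2 * |Real.sin (x / 2)| := by
    rw [Complex.norm_def, Complex.normSq_apply]
    have hre : (Complex.exp (x * Complex.I) - 1).re = Real.cos x - 1 := by
      simp [Complex.exp_ofReal_mul_I_re]
    have him : (Complex.exp (x * Complex.I) - 1).im = Real.sin x := by
      simp [Complex.exp_ofReal_mul_I_im]
    rw [hre, him, Real.abs_sin_half]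
    rw [show (Real.cos x - 1) * (Real.cos x - 1) + Real.sin x * Real.sin x
        = 4 * ((1 - Real.cos x) / 2) by
      have := Real.sin_sq_add_cos_sq x; nlinarith]
    rw [show (4 : ℝ) * ((1 - Real.cos x) / 2) = 2^2 * ((1 - Real.cos x)/2) by norm_num,
      Real.sqrt_mul (by positivity), Real.sqrt_sq (by norm_num)]
  rw [habs]
  refine le_min ?_ ?_
  · nlinarith [Real.abs_sin_le_one (x/2), abs_nonneg (Real.sin (x/2))]
  · have h1 : |Real.sin (x/2)| ≤ |x/2| := Real.abs_sin_le_abs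
    have h2 : (2:ℝ) * |x/2| = |x| := by rw [abs_div, abs_two]; ring
    nlinarith

lemma aux_cs {ι : Type*} [Countable ι] [MeasurableSpace ι] [MeasurableSingletonClass ι]
    (f g : ι → ENNReal) :
    (∑' i, f i * g i) ^ 2 ≤ (∑' i, (f i) ^ 2) * (∑' i, (g i) ^ 2) := by
  have hpq : Real.HolderConjugate 2 2 := Real.HolderConjugate.two_two
  have h := ENNReal.lintegral_mul_le_Lp_mul_Lq (Measure.count (α := ι)) hpq
    (measurable_of_countable f).aemeasurable (measurable_of_countable g).aemeasurable
  simp only [lintegral_count] at h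
  calc (∑' i, f i * g i) ^ 2
      ≤ ((∑' i, f i ^ (2:ℝ)) ^ (1/(2:ℝ)) * (∑' i, g i ^ (2:ℝ)) ^ (1/(2:ℝ))) ^ 2 := by
        exact pow_le_pow_left' h 2
    _ = (∑' i, (f i) ^ 2) * (∑' i, (g i) ^ 2) := by
        rw [mul_pow, ← ENNReal.rpow_natCast (_ ^ (1/(2:ℝ))) 2,
          ← ENNReal.rpow_natCast (_ ^ (1/(2:ℝ))) 2, ← ENNReal.rpow_mul, ← ENNReal.rpow_mul]
        norm_num [ENNReal.rpow_two]

lemma aux_min_rpow {γ : ℝ} (h0 : 0 ≤ γ) (h1 : γ ≤ 1) {x : ℝ} (hx : 0 ≤ x) :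
    min 2 x ≤ 2 * x ^ γ := by
  rcases le_total x 2 with h | h
  · calc min 2 x ≤ x := min_le_right _ _
    _ = x ^ γ * x ^ (1 - γ) := by
        rw [← Real.rpow_add_of_nonneg hx h0 (by linarith)]; norm_num
    _ ≤ x ^ γ * 2 ^ (1 - γ) :=
        mul_le_mul_of_nonneg_left (Real.rpow_le_rpow hx h (by linarith))
          (Real.rpow_nonneg hx γ)
    _ ≤ x ^ γ * 2 ^ (1:ℝ) :=
        mul_le_mul_of_nonneg_left
          (Real.rpow_le_rpow_of_exponent_le one_le_two (by linarith))
          (Real.rpow_nonneg hx γ)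
    _ = 2 * x ^ γ := by rw [Real.rpow_one]; ring
  · calc min 2 x ≤ 2 := min_le_left _ _
    _ = 2 * 1 := by ring
    _ ≤ 2 * x ^ γ := by
        gcongr
        calc (1:ℝ) = 1 ^ γ := (Real.one_rpow γ).symm
        _ ≤ x ^ γ := Real.rpow_le_rpow zero_le_one (by linarith) h0

lemma aux_weight_split {s : ℝ} (hs : 0 ≤ s) (a b c : ℤ) :
    (1 + |((a + b + c : ℤ) : ℝ)|) ^ s
      ≤ 3 ^ s * ((1 + |(a:ℝ)|) ^ s + (1 + |(b:ℝ)|) ^ s + (1 + |(c:ℝ)|) ^ s) := by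
  set A := 1 + |(a:ℝ)|
  set B := 1 + |(b:ℝ)|
  set C := 1 + |(c:ℝ)|
  have hA : 1 ≤ A := by simp [A, abs_nonneg]
  have hB : 1 ≤ B := by simp [B, abs_nonneg]
  have hC : 1 ≤ C := by simp [C, abs_nonneg]
  have hM : 1 + |((a + b + c : ℤ) : ℝ)| ≤ 3 * max (max A B) C := by
    have h1 : |((a + b + c : ℤ) : ℝ)| ≤ |(a:ℝ)| + |(b:ℝ)| + |(c:ℝ)| := by
      push_cast
      calc |(a:ℝ) + b + c| ≤ |(a:ℝ) + b| + |(c:ℝ)| := abs_add_le _ _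
      _ ≤ |(a:ℝ)| + |(b:ℝ)| + |(c:ℝ)| := by gcongr; exact abs_add_le _ _
    have := le_max_left (max A B) C
    have := le_max_right (max A B) C
    have := (le_max_left A B).trans (le_max_left (max A B) C)
    have := (le_max_right A B).trans (le_max_left (max A B) C)
    simp only [A, B, C] at *
    nlinarith [abs_nonneg ((a:ℝ)), abs_nonneg ((b:ℝ)), abs_nonneg ((c:ℝ))]
  calc (1 + |((a + b + c : ℤ) : ℝ)|) ^ s ≤ (3 * max (max A B) C) ^ s :=
        Real.rpow_le_rpow (by positivity) hM hs
    _ = 3 ^ s * (max (max A B) C) ^ s := Real.mul_rpow (by norm_num) (by positivity)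
    _ ≤ 3 ^ s * (A ^ s + B ^ s + C ^ s) := by
        refine mul_le_mul_of_nonneg_left ?_ (Real.rpow_nonneg (by norm_num) s)
        rcases max_cases (max A B) C with ⟨h, _⟩ | ⟨h, _⟩
        · rcases max_cases A B with ⟨h', _⟩ | ⟨h', _⟩ <;> rw [h, h'] <;>
            nlinarith [Real.rpow_nonneg (le_trans zero_le_one hA : (0:ℝ) ≤ A) s,
              Real.rpow_nonneg (le_trans zero_le_one hB : (0:ℝ) ≤ B) s,
              Real.rpow_nonneg (le_trans zero_le_one hC : (0:ℝ) ≤ C) s]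
        · rw [h]
          nlinarith [Real.rpow_nonneg (le_trans zero_le_one hA : (0:ℝ) ≤ A) s,
            Real.rpow_nonneg (le_trans zero_le_one hB : (0:ℝ) ≤ B) s,
            Real.rpow_nonneg (le_trans zero_le_one hC : (0:ℝ) ≤ C) s]

lemma aux_summable_weight {r : ℝ} (hr : 1/2 < r) :
    Summable (fun j : ℤ => (1 + |(j:ℝ)|) ^ (-(2*r))) := by
  have h1 : Summable (fun j : ℤ => |(j:ℝ)| ^ (-(2*r))) :=
    Real.summable_abs_int_rpow (by linarith)
  have h2 : Summable (fun j : ℤ => |(j:ℝ)| ^ (-(2*r)) + if j = 0 then 1 else 0) := by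
    refine h1.add (summable_of_ne_finset_zero (s := {0}) ?_)
    intro j hj
    simp at hj
    simp [hj]
  refine h2.of_nonneg_of_le (fun j => Real.rpow_nonneg (by positivity) _) fun j => ?_
  rcases eq_or_ne j 0 with rfl | hj
  · simp [Real.zero_rpow (show -(2*r) ≠ 0 by intro h; nlinarith)]
  · have hj1 : (1:ℝ) ≤ |(j:ℝ)| := by
      rw [← Int.cast_abs]
      exact_mod_cast Int.one_le_abs hj
    simp only [hj, if_false, add_zero]
    exact (Real.rpow_le_rpow_of_nonpos (by linarith) (by linarith) (by linarith)).trans le_rfl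

lemma aux_exp_rpow {γ : ℝ} (h0 : 0 ≤ γ) (h1 : γ ≤ 1) {t : ℝ} (ht : 0 ≤ t) (n : ℤ) :
    norm (Complex.exp (2 * Complex.I * t * (n : ℂ)) - 1)
      ≤ 4 * t ^ γ * |(n:ℝ)| ^ γ := by
  have harg : 2 * Complex.I * t * (n : ℂ) = ((2 * t * (n:ℝ) : ℝ) : ℂ) * Complex.I := by
    push_cast; ring
  rw [harg]
  calc norm (Complex.exp (((2 * t * (n:ℝ) : ℝ) : ℂ) * Complex.I) - 1)
      ≤ min 2 |2 * t * (n:ℝ)| := aux_exp_bound _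
    _ ≤ 2 * |2 * t * (n:ℝ)| ^ γ := aux_min_rpow h0 h1 (abs_nonneg _)
    _ = 2 * (2 * t * |(n:ℝ)|) ^ γ := by
        rw [abs_mul, abs_mul, abs_of_nonneg ht, abs_two]
    _ = 2 * (2 ^ γ * t ^ γ * |(n:ℝ)| ^ γ) := by
        rw [Real.mul_rpow (by positivity) (abs_nonneg _),
          Real.mul_rpow (by norm_num) ht]
    _ ≤ 2 * (2 ^ (1:ℝ) * t ^ γ * |(n:ℝ)| ^ γ) := by
        have h2 : (2:ℝ) ^ γ ≤ 2 ^ (1:ℝ) :=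
          Real.rpow_le_rpow_of_exponent_le one_le_two h1
        have ha := Real.rpow_nonneg ht γ
        have hb := Real.rpow_nonneg (abs_nonneg ((n:ℝ))) γ
        refine mul_le_mul_of_nonneg_left ?_ (by norm_num)
        exact mul_le_mul_of_nonneg_right (mul_le_mul_of_nonneg_right h2 ha) hb
    _ = 4 * t ^ γ * |(n:ℝ)| ^ γ := by rw [Real.rpow_one]; ring

lemma aux_integral_bound {γ τ : ℝ} (h0 : 0 ≤ γ) (h1 : γ ≤ 1) (hτ : 0 ≤ τ) (n₁ n₂ : ℤ) :
    norm (∫ s in (0:ℝ)..τ,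
        (Complex.exp (2 * Complex.I * s * (n₁ : ℂ)) - 1) *
        (Complex.exp (2 * Complex.I * s * (n₂ : ℂ)) - 1))
      ≤ 16 * τ ^ (1 + 2*γ) * (|(n₁:ℝ)| ^ γ * |(n₂:ℝ)| ^ γ) := by
  set C : ℝ := 16 * (|(n₁:ℝ)| ^ γ * |(n₂:ℝ)| ^ γ) with hC
  have hCpos : 0 ≤ C := by positivity
  have hbound : IntervalIntegrable (fun s : ℝ => C * s ^ (2*γ)) volume 0 τ :=
    (intervalIntegral.intervalIntegrable_rpow' (by linarith)).const_mul C
  have hle : ‖∫ s in (0:ℝ)..τ,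
        (Complex.exp (2 * Complex.I * s * (n₁ : ℂ)) - 1) *
        (Complex.exp (2 * Complex.I * s * (n₂ : ℂ)) - 1)‖
      ≤ |∫ s in (0:ℝ)..τ, C * s ^ (2*γ)| := by
    refine intervalIntegral.norm_integral_le_abs_of_norm_le ?_ hbound
    filter_upwards [ae_restrict_mem measurableSet_uIoc] with t ht
    rw [Set.uIoc_of_le hτ] at ht
    have ht0 : 0 ≤ t := ht.1.le
    rw [norm_mul]
    calc ‖Complex.exp (2 * Complex.I * t * (n₁ : ℂ)) - 1‖ *
          ‖Complex.exp (2 * Complex.I * t * (n₂ : ℂ)) - 1‖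
        ≤ (4 * t ^ γ * |(n₁:ℝ)| ^ γ) * (4 * t ^ γ * |(n₂:ℝ)| ^ γ) := by
          refine mul_le_mul (aux_exp_rpow h0 h1 ht0 n₁) (aux_exp_rpow h0 h1 ht0 n₂)
            (norm_nonneg _) (by positivity)
      _ = C * (t ^ γ * t ^ γ) := by rw [hC]; ring
      _ = C * t ^ (2*γ) := by
          rw [← Real.rpow_add_of_nonneg ht0 h0 h0]; ring_nf
  have hint : (∫ s in (0:ℝ)..τ, C * s ^ (2*γ)) = C * (τ ^ (2*γ+1) / (2*γ+1)) := by
    rw [intervalIntegral.integral_const_mul, integral_rpow (Or.inl (by linarith))]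
    rw [Real.zero_rpow (by positivity)]
    ring
  have hfin : |∫ s in (0:ℝ)..τ, C * s ^ (2*γ)|
      ≤ 16 * τ ^ (1+2*γ) * (|(n₁:ℝ)| ^ γ * |(n₂:ℝ)| ^ γ) := by
    rw [hint, abs_of_nonneg (by positivity)]
    have hτp : 0 ≤ τ ^ (2*γ+1) := Real.rpow_nonneg hτ _
    have : τ ^ (2*γ+1) / (2*γ+1) ≤ τ ^ (2*γ+1) := by
      apply div_le_self hτp (by linarith)
    calc C * (τ ^ (2*γ+1) / (2*γ+1)) ≤ C * τ ^ (2*γ+1) := by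
          exact mul_le_mul_of_nonneg_left this hCpos
      _ = 16 * τ ^ (1+2*γ) * (|(n₁:ℝ)| ^ γ * |(n₂:ℝ)| ^ γ) := by
          rw [hC, add_comm (2*γ) 1]; ring
  calc norm _ ≤ |∫ s in (0:ℝ)..τ, C * s ^ (2*γ)| := hle
    _ ≤ _ := hfin

lemma aux_sqrt_sq (x : ENNReal) : x ^ ((1:ℝ)/2) * x ^ ((1:ℝ)/2) = x := by
  rw [← sq, ← ENNReal.rpow_natCast (x ^ ((1:ℝ)/2)) 2, ← ENNReal.rpow_mul]
  norm_num

lemma aux_prod_tsum (b₁ b₂ : ℤ → ENNReal) :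
    ∑' p : ℤ × ℤ, b₁ p.1 * b₂ p.2 = (∑' j, b₁ j) * (∑' j, b₂ j) := by
  rw [ENNReal.tsum_prod']
  simp_rw [ENNReal.tsum_mul_left, ENNReal.tsum_mul_right]

lemma aux_core (b w : ℤ → ENNReal) :
    ∑' k : ℤ, (∑' p : ℤ × ℤ, b p.1 * b p.2 * w (k - p.1 - p.2)) ^ 2
      ≤ (∑' j, b j) ^ 2 * ((∑' j, b j) ^ 2 * ∑' j, (w j) ^ 2) := by
  set B := ∑' j, b j with hB
  have hstep : ∀ k : ℤ, (∑' p : ℤ × ℤ, b p.1 * b p.2 * w (k - p.1 - p.2)) ^ 2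
      ≤ B ^ 2 * ∑' p : ℤ × ℤ, b p.1 * b p.2 * (w (k - p.1 - p.2)) ^ 2 := by
    intro k
    have hcs := aux_cs (fun p : ℤ × ℤ => (b p.1 * b p.2) ^ ((1:ℝ)/2))
      (fun p : ℤ × ℤ => (b p.1 * b p.2) ^ ((1:ℝ)/2) * w (k - p.1 - p.2))
    have e1 : ∀ p : ℤ × ℤ, (b p.1 * b p.2) ^ ((1:ℝ)/2) *
        ((b p.1 * b p.2) ^ ((1:ℝ)/2) * w (k - p.1 - p.2))
          = b p.1 * b p.2 * w (k - p.1 - p.2) := by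
      intro p; rw [← mul_assoc, aux_sqrt_sq]
    have e2 : ∀ p : ℤ × ℤ, ((b p.1 * b p.2) ^ ((1:ℝ)/2)) ^ 2 = b p.1 * b p.2 := by
      intro p; rw [sq, aux_sqrt_sq]
    have e3 : ∀ p : ℤ × ℤ, ((b p.1 * b p.2) ^ ((1:ℝ)/2) * w (k - p.1 - p.2)) ^ 2
        = b p.1 * b p.2 * (w (k - p.1 - p.2)) ^ 2 := by
      intro p; rw [mul_pow, sq ((b p.1 * b p.2) ^ ((1:ℝ)/2)), aux_sqrt_sq]
    simp only [e1, e2, e3] at hcs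
    calc (∑' p : ℤ × ℤ, b p.1 * b p.2 * w (k - p.1 - p.2)) ^ 2
        ≤ (∑' p : ℤ × ℤ, b p.1 * b p.2) *
            ∑' p : ℤ × ℤ, b p.1 * b p.2 * (w (k - p.1 - p.2)) ^ 2 := hcs
      _ = B ^ 2 * ∑' p : ℤ × ℤ, b p.1 * b p.2 * (w (k - p.1 - p.2)) ^ 2 := by
          rw [aux_prod_tsum, ← hB, sq]
  calc ∑' k : ℤ, (∑' p : ℤ × ℤ, b p.1 * b p.2 * w (k - p.1 - p.2)) ^ 2
      ≤ ∑' k : ℤ, B ^ 2 * ∑' p : ℤ × ℤ, b p.1 * b p.2 * (w (k - p.1 - p.2)) ^ 2 :=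
        ENNReal.tsum_le_tsum hstep
    _ = B ^ 2 * ∑' k : ℤ, ∑' p : ℤ × ℤ, b p.1 * b p.2 * (w (k - p.1 - p.2)) ^ 2 :=
        ENNReal.tsum_mul_left
    _ = B ^ 2 * ∑' p : ℤ × ℤ, ∑' k : ℤ, b p.1 * b p.2 * (w (k - p.1 - p.2)) ^ 2 := by
        rw [ENNReal.tsum_comm]
    _ = B ^ 2 * ∑' p : ℤ × ℤ, b p.1 * b p.2 * ∑' j, (w j) ^ 2 := by
        congr 1
        refine tsum_congr fun p => ?_
        rw [ENNReal.tsum_mul_left]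
        congr 1
        have := (Equiv.subRight (p.1 + p.2)).tsum_eq (fun j => (w j) ^ 2)
        simp only [Equiv.subRight_apply] at this
        rw [← this]
        refine tsum_congr fun k => ?_
        congr 1
        ring
    _ = B ^ 2 * (B ^ 2 * ∑' j, (w j) ^ 2) := by
        rw [ENNReal.tsum_mul_right, aux_prod_tsum, ← hB, sq]

noncomputable def auxEquiv₁ (k : ℤ) : ℤ × ℤ ≃ ℤ × ℤ where
  toFun p := (p.2, k - p.1 - p.2)
  invFun q := (k - q.1 - q.2, q.1)
  left_inv p := by
    obtain ⟨a, c⟩ := p; dsimp only; simp only [Prod.mk.injEq, and_true, true_and]; ring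
  right_inv q := by
    obtain ⟨a, c⟩ := q; dsimp only; simp only [Prod.mk.injEq, and_true, true_and]; ring

noncomputable def auxEquiv₂ (k : ℤ) : ℤ × ℤ ≃ ℤ × ℤ where
  toFun p := (p.1, k - p.1 - p.2)
  invFun q := (q.1, k - q.1 - q.2)
  left_inv p := by
    obtain ⟨a, c⟩ := p; dsimp only; simp only [Prod.mk.injEq, and_true, true_and]; ring
  right_inv q := by
    obtain ⟨a, c⟩ := q; dsimp only; simp only [Prod.mk.injEq, and_true, true_and]; ring

lemma aux_reindex₁ (b w : ℤ → ENNReal) (k : ℤ) :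
    ∑' p : ℤ × ℤ, w p.1 * b p.2 * b (k - p.1 - p.2)
      = ∑' p : ℤ × ℤ, b p.1 * b p.2 * w (k - p.1 - p.2) := by
  have h := (auxEquiv₁ k).tsum_eq (fun p : ℤ × ℤ => b p.1 * b p.2 * w (k - p.1 - p.2))
  rw [← h]
  refine tsum_congr fun p => ?_
  obtain ⟨a, c⟩ := p
  simp only [auxEquiv₁, Equiv.coe_fn_mk]
  have h1 : k - c - (k - a - c) = a := by ring
  rw [h1]
  ring

lemma aux_reindex₂ (b w : ℤ → ENNReal) (k : ℤ) :
    ∑' p : ℤ × ℤ, b p.1 * w p.2 * b (k - p.1 - p.2)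
      = ∑' p : ℤ × ℤ, b p.1 * b p.2 * w (k - p.1 - p.2) := by
  have h := (auxEquiv₂ k).tsum_eq (fun p : ℤ × ℤ => b p.1 * b p.2 * w (k - p.1 - p.2))
  rw [← h]
  refine tsum_congr fun p => ?_
  obtain ⟨a, c⟩ := p
  simp only [auxEquiv₂, Equiv.coe_fn_mk]
  have h1 : k - a - (k - a - c) = c := by ring
  rw [h1]
  ring

lemma aux_abs_rpow_le {γ : ℝ} (h0 : 0 ≤ γ) (n : ℤ) :
    |(n:ℝ)| ^ γ ≤ (1 + |(n:ℝ)|) ^ γ :=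
  Real.rpow_le_rpow (abs_nonneg _) (by linarith [abs_nonneg ((n:ℝ))]) h0

lemma aux_term_bound {γ τ : ℝ} (h0 : 0 ≤ γ) (h1 : γ ≤ 1) (hτ : 0 ≤ τ)
    (v : ℤ → ℂ) (k : ℤ) (p : ℤ × ℤ) :
    norm ((∫ s in (0 : ℝ)..τ,
        (Complex.exp (2 * Complex.I * s * ((p.1 * k : ℤ) : ℂ)) - 1) *
        (Complex.exp (2 * Complex.I * s * ((p.2 * (k - p.1 - p.2) : ℤ) : ℂ)) - 1)) *
      ((starRingEnd ℂ) (v p.1) * v p.2 * v (k - p.1 - p.2)))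
    ≤ (16 * τ ^ (1 + 2*γ) * (1 + |(k:ℝ)|) ^ γ) *
      (((1 + |(p.1:ℝ)|) ^ γ * norm (v p.1)) *
        (((1 + |(p.2:ℝ)|) ^ γ * norm (v p.2)) *
          ((1 + |((k - p.1 - p.2 : ℤ):ℝ)|) ^ γ * norm (v (k - p.1 - p.2))))) := by
  obtain ⟨a, c⟩ := p
  simp only
  set m : ℤ := k - a - c with hm
  rw [norm_mul, norm_mul, norm_mul, Complex.norm_conj]
  have hint := aux_integral_bound h0 h1 hτ (a * k) (c * m)
  have h₁ : |((a * k : ℤ):ℝ)| ^ γ ≤ (1 + |(a:ℝ)|) ^ γ * (1 + |(k:ℝ)|) ^ γ := by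
    rw [show ((a * k : ℤ):ℝ) = (a:ℝ) * (k:ℝ) by push_cast; ring, abs_mul,
      Real.mul_rpow (abs_nonneg _) (abs_nonneg _)]
    exact mul_le_mul (aux_abs_rpow_le h0 a) (aux_abs_rpow_le h0 k)
      (Real.rpow_nonneg (abs_nonneg _) _) (Real.rpow_nonneg (by positivity) _)
  have h₂ : |((c * m : ℤ):ℝ)| ^ γ ≤ (1 + |(c:ℝ)|) ^ γ * (1 + |(m:ℝ)|) ^ γ := by
    rw [show ((c * m : ℤ):ℝ) = (c:ℝ) * (m:ℝ) by push_cast; ring, abs_mul,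
      Real.mul_rpow (abs_nonneg _) (abs_nonneg _)]
    exact mul_le_mul (aux_abs_rpow_le h0 c) (aux_abs_rpow_le h0 m)
      (Real.rpow_nonneg (abs_nonneg _) _) (Real.rpow_nonneg (by positivity) _)
  have hIb : norm (∫ s in (0 : ℝ)..τ,
        (Complex.exp (2 * Complex.I * s * ((a * k : ℤ) : ℂ)) - 1) *
        (Complex.exp (2 * Complex.I * s * ((c * m : ℤ) : ℂ)) - 1))
      ≤ 16 * τ ^ (1 + 2*γ) *
        ((1 + |(a:ℝ)|) ^ γ * (1 + |(k:ℝ)|) ^ γ * ((1 + |(c:ℝ)|) ^ γ * (1 + |(m:ℝ)|) ^ γ)) := by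
    refine hint.trans ?_
    have h16 : (0:ℝ) ≤ 16 * τ ^ (1 + 2*γ) := by positivity
    refine mul_le_mul_of_nonneg_left ?_ h16
    exact mul_le_mul h₁ h₂ (Real.rpow_nonneg (abs_nonneg _) _) (by positivity)
  calc norm (∫ s in (0 : ℝ)..τ,
        (Complex.exp (2 * Complex.I * s * ((a * k : ℤ) : ℂ)) - 1) *
        (Complex.exp (2 * Complex.I * s * ((c * m : ℤ) : ℂ)) - 1)) *
      (norm (v a) * norm (v c) * norm (v m))
      ≤ (16 * τ ^ (1 + 2*γ) *
          ((1 + |(a:ℝ)|) ^ γ * (1 + |(k:ℝ)|) ^ γ * ((1 + |(c:ℝ)|) ^ γ * (1 + |(m:ℝ)|) ^ γ))) *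
        (norm (v a) * norm (v c) * norm (v m)) := by
        refine mul_le_mul_of_nonneg_right hIb (by positivity)
    _ = (16 * τ ^ (1 + 2*γ) * (1 + |(k:ℝ)|) ^ γ) *
      (((1 + |(a:ℝ)|) ^ γ * norm (v a)) *
        (((1 + |(c:ℝ)|) ^ γ * norm (v c)) *
          ((1 + |(m:ℝ)|) ^ γ * norm (v m)))) := by ring

lemma aux_exp_im_abs (x : ℝ) (n : ℤ) :
    norm (Complex.exp (2 * Complex.I * x * (n : ℂ)) - 1) ≤ 2 := by
  have hre : (2 * Complex.I * (x:ℂ) * ((n:ℤ):ℂ)).re = 0 := by simp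
  calc norm (Complex.exp (2 * Complex.I * x * (n : ℂ)) - 1)
      ≤ norm (Complex.exp (2 * Complex.I * x * (n : ℂ))) + ‖(1:ℂ)‖ := by
        simpa using norm_sub_le (Complex.exp (2 * Complex.I * x * (n : ℂ))) 1
    _ = 2 := by rw [Complex.norm_exp, hre]; norm_num

lemma aux_int_bdd (τ : ℝ) (n₁ n₂ : ℤ) :
    norm (∫ s in (0:ℝ)..τ,
        (Complex.exp (2 * Complex.I * s * (n₁ : ℂ)) - 1) *
        (Complex.exp (2 * Complex.I * s * (n₂ : ℂ)) - 1)) ≤ 4 * |τ| := by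
  have h := intervalIntegral.norm_integral_le_of_norm_le_const (C := 4) (a := (0:ℝ)) (b := τ)
    (f := fun s : ℝ => (Complex.exp (2 * Complex.I * s * (n₁ : ℂ)) - 1) *
        (Complex.exp (2 * Complex.I * s * (n₂ : ℂ)) - 1)) ?_
  · simpa using h
  · intro x _
    rw [norm_mul]
    calc ‖Complex.exp (2 * Complex.I * x * (n₁ : ℂ)) - 1‖ *
          ‖Complex.exp (2 * Complex.I * x * (n₂ : ℂ)) - 1‖
        ≤ 2 * 2 := mul_le_mul (aux_exp_im_abs x n₁) (aux_exp_im_abs x n₂)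
            (norm_nonneg _) (by norm_num)
      _ = 4 := by norm_num

lemma aux_summable_F {τ : ℝ} (v : ℤ → ℂ) (M : ℝ)
    (hu : Summable (fun j : ℤ => norm (v j)))
    (hM : ∀ j : ℤ, norm (v j) ≤ M) (k : ℤ) :
    Summable (fun p : ℤ × ℤ =>
      norm ((∫ s in (0 : ℝ)..τ,
          (Complex.exp (2 * Complex.I * s * ((p.1 * k : ℤ) : ℂ)) - 1) *
          (Complex.exp (2 * Complex.I * s * ((p.2 * (k - p.1 - p.2) : ℤ) : ℂ)) - 1)) *
        ((starRingEnd ℂ) (v p.1) * v p.2 * v (k - p.1 - p.2)))) := by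
  have hprod : Summable (fun p : ℤ × ℤ => norm (v p.1) * norm (v p.2)) :=
    hu.mul_of_nonneg hu (fun j => norm_nonneg _) (fun j => norm_nonneg _)
  refine ((hprod.mul_left (4 * |τ| * M)).of_nonneg_of_le
    (fun p => norm_nonneg _) fun p => ?_)
  rw [norm_mul, norm_mul, norm_mul, Complex.norm_conj]
  have hI := aux_int_bdd τ (p.1 * k) (p.2 * (k - p.1 - p.2))
  have hMnn : 0 ≤ M := (norm_nonneg _).trans (hM 0)
  calc norm (∫ s in (0 : ℝ)..τ,
          (Complex.exp (2 * Complex.I * s * ((p.1 * k : ℤ) : ℂ)) - 1) *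
          (Complex.exp (2 * Complex.I * s * ((p.2 * (k - p.1 - p.2) : ℤ) : ℂ)) - 1)) *
        (norm (v p.1) * norm (v p.2) * norm (v (k - p.1 - p.2)))
      ≤ (4 * |τ|) * ((norm (v p.1) * norm (v p.2)) * M) := by
        refine mul_le_mul hI ?_ (by positivity) (by positivity)
        rw [mul_assoc]
        exact mul_le_mul_of_nonneg_left
          (mul_le_mul_of_nonneg_left (hM _) (norm_nonneg _))
          (norm_nonneg _) |>.trans (le_of_eq (by ring))
    _ = 4 * |τ| * M * (norm (v p.1) * norm (v p.2)) := by ring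

lemma aux_summable_mul {a c : ℤ → ℝ} (ha : ∀ j, 0 ≤ a j) (hc : ∀ j, 0 ≤ c j)
    (h1 : Summable fun j => a j ^ 2) (h2 : Summable fun j => c j ^ 2) :
    Summable fun j => a j * c j := by
  refine (h1.add h2).of_nonneg_of_le (fun j => mul_nonneg (ha j) (hc j)) fun j => ?_
  nlinarith [sq_nonneg (a j - c j)]

lemma aux_rpow_sq {x : ℝ} (hx : 0 ≤ x) (a : ℝ) : (x ^ a) ^ 2 = x ^ (2 * a) := by
  rw [← Real.rpow_natCast (x ^ a) 2, ← Real.rpow_mul hx]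
  norm_num [mul_comm]

set_option maxHeartbeats 1000000 in
lemma aux_key {r γ τ : ℝ} (hr : 1/2 < r) (h0 : 0 ≤ γ) (h1 : γ ≤ 1) (hτ : 0 ≤ τ)
    (v : ℤ → ℂ) (k : ℤ)
    (hSk : Summable (fun p : ℤ × ℤ =>
      norm ((∫ s in (0 : ℝ)..τ,
          (Complex.exp (2 * Complex.I * s * ((p.1 * k : ℤ) : ℂ)) - 1) *
          (Complex.exp (2 * Complex.I * s * ((p.2 * (k - p.1 - p.2) : ℤ) : ℂ)) - 1)) *
        ((starRingEnd ℂ) (v p.1) * v p.2 * v (k - p.1 - p.2))))) :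
    ENNReal.ofReal ((1 + |(k:ℝ)|) ^ r * norm (∑' p : ℤ × ℤ,
        (∫ s in (0 : ℝ)..τ,
          (Complex.exp (2 * Complex.I * s * ((p.1 * k : ℤ) : ℂ)) - 1) *
          (Complex.exp (2 * Complex.I * s * ((p.2 * (k - p.1 - p.2) : ℤ) : ℂ)) - 1)) *
        ((starRingEnd ℂ) (v p.1) * v p.2 * v (k - p.1 - p.2))))
    ≤ ENNReal.ofReal (48 * 3 ^ (r + γ) * τ ^ (1 + 2*γ)) *
      ∑' p : ℤ × ℤ,
        ENNReal.ofReal ((1 + |(p.1:ℝ)|) ^ γ * norm (v p.1)) *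
        ENNReal.ofReal ((1 + |(p.2:ℝ)|) ^ γ * norm (v p.2)) *
        ENNReal.ofReal ((1 + |((k - p.1 - p.2 : ℤ):ℝ)|) ^ (r + 2*γ) *
          norm (v (k - p.1 - p.2))) := by
  have hr0 : (0:ℝ) < r := by linarith
  set s : ℝ := r + γ with hs
  have hs0 : (0:ℝ) ≤ s := by simp only [hs]; linarith
  set bE : ℤ → ENNReal :=
    fun j => ENNReal.ofReal ((1 + |(j:ℝ)|) ^ γ * norm (v j)) with hbE
  set wE : ℤ → ENNReal :=
    fun j => ENNReal.ofReal ((1 + |(j:ℝ)|) ^ (r + 2*γ) * norm (v j)) with hwE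
  set EWs : ℤ → ENNReal := fun j => ENNReal.ofReal ((1 + |(j:ℝ)|) ^ s) with hEWs
  set F : ℤ × ℤ → ℂ := fun p =>
      (∫ s in (0 : ℝ)..τ,
        (Complex.exp (2 * Complex.I * s * ((p.1 * k : ℤ) : ℂ)) - 1) *
        (Complex.exp (2 * Complex.I * s * ((p.2 * (k - p.1 - p.2) : ℤ) : ℂ)) - 1)) *
      ((starRingEnd ℂ) (v p.1) * v p.2 * v (k - p.1 - p.2)) with hF
  set Gk : ENNReal := ∑' p : ℤ × ℤ, bE p.1 * bE p.2 * wE (k - p.1 - p.2) with hGk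
  have hwb : ∀ j : ℤ, EWs j * bE j = wE j := by
    intro j
    rw [hEWs, hbE, hwE]
    simp only
    rw [← ENNReal.ofReal_mul (Real.rpow_nonneg (by positivity) _), ← mul_assoc,
      ← Real.rpow_add (by positivity)]
    congr 2
    rw [hs]; ring
  have habsR : norm (∑' p : ℤ × ℤ, F p) ≤ ∑' p : ℤ × ℤ, norm (F p) := by
    exact
      norm_tsum_le_tsum_norm (f := F) hSk
  have hstep1 : ENNReal.ofReal ((1 + |(k:ℝ)|) ^ r * norm (∑' p : ℤ × ℤ, F p))
      ≤ ENNReal.ofReal ((1 + |(k:ℝ)|) ^ r) *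
        ∑' p : ℤ × ℤ, ENNReal.ofReal (norm (F p)) := by
    rw [ENNReal.ofReal_mul (Real.rpow_nonneg (by positivity) _)]
    refine mul_le_mul_right ?_ _
    calc ENNReal.ofReal (norm (∑' p : ℤ × ℤ, F p))
        ≤ ENNReal.ofReal (∑' p : ℤ × ℤ, norm (F p)) := ENNReal.ofReal_le_ofReal habsR
      _ = ∑' p : ℤ × ℤ, ENNReal.ofReal (norm (F p)) :=
          ENNReal.ofReal_tsum_of_nonneg (fun p => norm_nonneg _) hSk
  have hstep2 : ∀ p : ℤ × ℤ, ENNReal.ofReal (norm (F p))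
      ≤ ENNReal.ofReal (16 * τ ^ (1 + 2*γ) * (1 + |(k:ℝ)|) ^ γ) *
        (bE p.1 * (bE p.2 * bE (k - p.1 - p.2))) := by
    intro p
    refine (ENNReal.ofReal_le_ofReal (aux_term_bound h0 h1 hτ v k p)).trans ?_
    rw [ENNReal.ofReal_mul
        (show (0:ℝ) ≤ 16 * τ ^ (1 + 2*γ) * (1 + |(k:ℝ)|) ^ γ by positivity),
      ENNReal.ofReal_mul
        (show (0:ℝ) ≤ (1 + |(p.1:ℝ)|) ^ γ * norm (v p.1) by positivity),
      ENNReal.ofReal_mul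
        (show (0:ℝ) ≤ (1 + |(p.2:ℝ)|) ^ γ * norm (v p.2) by positivity)]
  have hstep3 : ENNReal.ofReal ((1 + |(k:ℝ)|) ^ r * norm (∑' p : ℤ × ℤ, F p))
      ≤ ENNReal.ofReal (16 * τ ^ (1 + 2*γ)) *
        (EWs k * ∑' p : ℤ × ℤ, (bE p.1 * (bE p.2 * bE (k - p.1 - p.2)))) := by
    refine hstep1.trans ?_
    calc ENNReal.ofReal ((1 + |(k:ℝ)|) ^ r) *
          ∑' p : ℤ × ℤ, ENNReal.ofReal (norm (F p))
        ≤ ENNReal.ofReal ((1 + |(k:ℝ)|) ^ r) *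
          ∑' p : ℤ × ℤ, ENNReal.ofReal (16 * τ ^ (1 + 2*γ) * (1 + |(k:ℝ)|) ^ γ) *
            (bE p.1 * (bE p.2 * bE (k - p.1 - p.2))) :=
          mul_le_mul_right (ENNReal.tsum_le_tsum hstep2) _
      _ = ENNReal.ofReal ((1 + |(k:ℝ)|) ^ r) *
          (ENNReal.ofReal (16 * τ ^ (1 + 2*γ) * (1 + |(k:ℝ)|) ^ γ) *
          ∑' p : ℤ × ℤ, (bE p.1 * (bE p.2 * bE (k - p.1 - p.2)))) := by
          rw [ENNReal.tsum_mul_left]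
      _ = (ENNReal.ofReal ((1 + |(k:ℝ)|) ^ r) *
            ENNReal.ofReal (16 * τ ^ (1 + 2*γ) * (1 + |(k:ℝ)|) ^ γ)) *
          ∑' p : ℤ × ℤ, (bE p.1 * (bE p.2 * bE (k - p.1 - p.2))) :=
          (mul_assoc _ _ _).symm
      _ = (ENNReal.ofReal (16 * τ ^ (1 + 2*γ)) * EWs k) *
          ∑' p : ℤ × ℤ, (bE p.1 * (bE p.2 * bE (k - p.1 - p.2))) := by
          congr 1
          rw [hEWs]
          simp only
          rw [← ENNReal.ofReal_mul (Real.rpow_nonneg (by positivity) _),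
            ← ENNReal.ofReal_mul (by positivity)]
          congr 1
          rw [hs, Real.rpow_add (show (0:ℝ) < 1 + |(k:ℝ)| by positivity) r γ]
          ring
      _ = ENNReal.ofReal (16 * τ ^ (1 + 2*γ)) *
          (EWs k * ∑' p : ℤ × ℤ, (bE p.1 * (bE p.2 * bE (k - p.1 - p.2)))) :=
          mul_assoc _ _ _
  have hsplit : ∀ p : ℤ × ℤ, EWs k ≤ ENNReal.ofReal (3 ^ s) *
      (EWs p.1 + EWs p.2 + EWs (k - p.1 - p.2)) := by
    intro p
    have h := aux_weight_split hs0 p.1 p.2 (k - p.1 - p.2)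
    have hk : p.1 + p.2 + (k - p.1 - p.2) = k := by ring
    rw [hk] at h
    calc EWs k ≤ ENNReal.ofReal (3 ^ s * ((1 + |(p.1:ℝ)|) ^ s + (1 + |(p.2:ℝ)|) ^ s +
          (1 + |((k - p.1 - p.2 : ℤ):ℝ)|) ^ s)) := ENNReal.ofReal_le_ofReal h
      _ = ENNReal.ofReal (3 ^ s) * (EWs p.1 + EWs p.2 + EWs (k - p.1 - p.2)) := by
          rw [ENNReal.ofReal_mul (by positivity),
            ENNReal.ofReal_add (by positivity) (by positivity),
            ENNReal.ofReal_add (by positivity) (by positivity)]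
  have hmain2 : EWs k * ∑' p : ℤ × ℤ, (bE p.1 * (bE p.2 * bE (k - p.1 - p.2)))
      ≤ ENNReal.ofReal (3 ^ s) * (3 * Gk) := by
    calc EWs k * ∑' p : ℤ × ℤ, (bE p.1 * (bE p.2 * bE (k - p.1 - p.2)))
        = ∑' p : ℤ × ℤ, EWs k * (bE p.1 * (bE p.2 * bE (k - p.1 - p.2))) :=
          ENNReal.tsum_mul_left.symm
      _ ≤ ∑' p : ℤ × ℤ, (ENNReal.ofReal (3 ^ s) *
            (EWs p.1 + EWs p.2 + EWs (k - p.1 - p.2))) *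
            (bE p.1 * (bE p.2 * bE (k - p.1 - p.2))) :=
          ENNReal.tsum_le_tsum (fun p => mul_le_mul_left (hsplit p) _)
      _ = ENNReal.ofReal (3 ^ s) * ∑' p : ℤ × ℤ,
            (EWs p.1 * (bE p.1 * (bE p.2 * bE (k - p.1 - p.2))) +
              (EWs p.2 * (bE p.1 * (bE p.2 * bE (k - p.1 - p.2))) +
                EWs (k - p.1 - p.2) * (bE p.1 * (bE p.2 * bE (k - p.1 - p.2))))) := by
          rw [← ENNReal.tsum_mul_left]
          refine tsum_congr fun p => ?_
          ring
      _ = ENNReal.ofReal (3 ^ s) *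
            ((∑' p : ℤ × ℤ, EWs p.1 * (bE p.1 * (bE p.2 * bE (k - p.1 - p.2)))) +
              ((∑' p : ℤ × ℤ, EWs p.2 * (bE p.1 * (bE p.2 * bE (k - p.1 - p.2)))) +
                ∑' p : ℤ × ℤ, EWs (k - p.1 - p.2) * (bE p.1 * (bE p.2 * bE (k - p.1 - p.2))))) := by
          rw [ENNReal.tsum_add]
          congr 1
          rw [ENNReal.tsum_add]
      _ = ENNReal.ofReal (3 ^ s) * (Gk + (Gk + Gk)) := by
          congr 1
          have e₁ : (∑' p : ℤ × ℤ, EWs p.1 * (bE p.1 * (bE p.2 * bE (k - p.1 - p.2)))) = Gk := by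
            rw [show (∑' p : ℤ × ℤ, EWs p.1 * (bE p.1 * (bE p.2 * bE (k - p.1 - p.2))))
                = ∑' p : ℤ × ℤ, wE p.1 * bE p.2 * bE (k - p.1 - p.2) from
              tsum_congr fun p => by rw [← hwb p.1]; ring]
            exact aux_reindex₁ bE wE k
          have e₂ : (∑' p : ℤ × ℤ, EWs p.2 * (bE p.1 * (bE p.2 * bE (k - p.1 - p.2)))) = Gk := by
            rw [show (∑' p : ℤ × ℤ, EWs p.2 * (bE p.1 * (bE p.2 * bE (k - p.1 - p.2))))
                = ∑' p : ℤ × ℤ, bE p.1 * wE p.2 * bE (k - p.1 - p.2) from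
              tsum_congr fun p => by rw [← hwb p.2]; ring]
            exact aux_reindex₂ bE wE k
          have e₃ : (∑' p : ℤ × ℤ, EWs (k - p.1 - p.2) *
              (bE p.1 * (bE p.2 * bE (k - p.1 - p.2)))) = Gk := by
            rw [hGk]
            refine tsum_congr fun p => ?_
            rw [← hwb (k - p.1 - p.2)]
            ring
          rw [e₁, e₂, e₃]
      _ = ENNReal.ofReal (3 ^ s) * (3 * Gk) := by
          congr 1
          ring
  calc ENNReal.ofReal ((1 + |(k:ℝ)|) ^ r * norm (∑' p : ℤ × ℤ, F p))
      ≤ ENNReal.ofReal (16 * τ ^ (1 + 2*γ)) *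
        (EWs k * ∑' p : ℤ × ℤ, (bE p.1 * (bE p.2 * bE (k - p.1 - p.2)))) := hstep3
    _ ≤ ENNReal.ofReal (16 * τ ^ (1 + 2*γ)) * (ENNReal.ofReal (3 ^ s) * (3 * Gk)) :=
        mul_le_mul_right hmain2 _
    _ = (ENNReal.ofReal (16 * τ ^ (1 + 2*γ)) * ENNReal.ofReal (3 ^ s) *
          ENNReal.ofReal 3) * Gk := by
        rw [show ((3:ENNReal)) = ENNReal.ofReal 3 by simp]
        ring
    _ = ENNReal.ofReal (48 * 3 ^ s * τ ^ (1 + 2*γ)) * Gk := by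
        rw [← ENNReal.ofReal_mul (by positivity), ← ENNReal.ofReal_mul (by positivity)]
        congr 1
        ring

/-- Weighted `H^r`-type norm of a sequence of Fourier coefficients. -/
noncomputable def wnorm (r : ℝ) (a : ℤ → ℂ) : ℝ :=
  Real.sqrt (∑' k : ℤ, (1 + |(k : ℝ)|) ^ (2 * r) * norm (a k) ^ 2)

set_option maxHeartbeats 2000000 in
theorem stmt5 (r γ : ℝ) (hr : 1 / 2 < r) (h0 : 0 ≤ γ) (h1 : γ ≤ 1) :
    ∃ c > 0, ∀ τ : ℝ, 0 ≤ τ → ∀ v : ℤ → ℂ,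
      Summable (fun k : ℤ =>
        (1 + |(k : ℝ)|) ^ (2 * (r + 2 * γ)) * norm (v k) ^ 2) →
      (∀ k : ℤ, Summable (fun p : ℤ × ℤ =>
        norm ((∫ s in (0 : ℝ)..τ,
            (Complex.exp (2 * Complex.I * s * ((p.1 * k : ℤ) : ℂ)) - 1) *
            (Complex.exp (2 * Complex.I * s * ((p.2 * (k - p.1 - p.2) : ℤ) : ℂ)) - 1)) *
          ((starRingEnd ℂ) (v p.1) * v p.2 * v (k - p.1 - p.2))))) ∧
      wnorm r (fun k : ℤ => ∑' p : ℤ × ℤ,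
          (∫ s in (0 : ℝ)..τ,
            (Complex.exp (2 * Complex.I * s * ((p.1 * k : ℤ) : ℂ)) - 1) *
            (Complex.exp (2 * Complex.I * s * ((p.2 * (k - p.1 - p.2) : ℤ) : ℂ)) - 1)) *
          ((starRingEnd ℂ) (v p.1) * v p.2 * v (k - p.1 - p.2)))
        ≤ c * τ ^ (1 + 2 * γ) * wnorm (r + γ) v ^ 2 * wnorm (r + 2 * γ) v := by
  have hr0 : (0:ℝ) < r := by linarith
  have hsw := aux_summable_weight hr
  have hsqw : Summable (fun j : ℤ => ((1 + |(j:ℝ)|) ^ (-r)) ^ 2) := by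
    refine hsw.congr fun j => ?_
    rw [aux_rpow_sq (by positivity) (-r)]
    congr 1
    ring
  have hCr2_one : (1:ℝ) ≤ ∑' j : ℤ, ((1 + |(j:ℝ)|) ^ (-r)) ^ 2 := by
    have h := Summable.le_tsum hsqw 0 (fun j _ => sq_nonneg _)
    simpa using h
  set Cr2 : ℝ := ∑' j : ℤ, ((1 + |(j:ℝ)|) ^ (-r)) ^ 2 with hCr2def
  have hCr2_pos : (0:ℝ) < Cr2 := lt_of_lt_of_le one_pos hCr2_one
  have h3s : (0:ℝ) < 3 ^ (r + γ) := Real.rpow_pos_of_pos (by norm_num) _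
  refine ⟨48 * 3 ^ (r + γ) * Cr2, by positivity, ?_⟩
  intro τ hτ v hv
  -- basic summability facts
  have hu0 : ∀ j : ℤ, (0:ℝ) ≤ norm (v j) := fun j => norm_nonneg _
  have hv2 : Summable (fun j : ℤ =>
      ((1 + |(j:ℝ)|) ^ (r + 2*γ) * norm (v j)) ^ 2) := by
    refine hv.congr fun j => ?_
    rw [mul_pow, aux_rpow_sq (by positivity) (r + 2*γ)]
  have hv1 : Summable (fun j : ℤ =>
      (1 + |(j:ℝ)|) ^ (2*(r + γ)) * norm (v j) ^ 2) := by
    refine hv.of_nonneg_of_le (fun j => by positivity) fun j => ?_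
    have hbase : (1:ℝ) ≤ 1 + |(j:ℝ)| := by linarith [abs_nonneg ((j:ℝ))]
    exact mul_le_mul_of_nonneg_right
      (Real.rpow_le_rpow_of_exponent_le hbase (by linarith)) (sq_nonneg _)
  have hg1 : Summable (fun j : ℤ =>
      ((1 + |(j:ℝ)|) ^ (r + γ) * norm (v j)) ^ 2) := by
    refine hv1.congr fun j => ?_
    rw [mul_pow, aux_rpow_sq (by positivity) (r + γ)]
  -- uniform bound on |v|
  set M : ℝ := Real.sqrt (∑' j : ℤ,
      ((1 + |(j:ℝ)|) ^ (r + 2*γ) * norm (v j)) ^ 2) with hMdef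
  have hMb : ∀ j : ℤ, norm (v j) ≤ M := by
    intro j
    have hbase : (1:ℝ) ≤ 1 + |(j:ℝ)| := by linarith [abs_nonneg ((j:ℝ))]
    have h1 : norm (v j) ≤ (1 + |(j:ℝ)|) ^ (r + 2*γ) * norm (v j) := by
      nth_rewrite 1 [← one_mul (norm (v j))]
      exact mul_le_mul_of_nonneg_right
        (Real.one_le_rpow hbase (by linarith)) (hu0 j)
    have h2 := Summable.le_tsum hv2 j (fun i _ => sq_nonneg _)
    have h3 : (1 + |(j:ℝ)|) ^ (r + 2*γ) * norm (v j) ≤ M := by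
      rw [hMdef]
      have h4 := Real.sqrt_le_sqrt h2
      rwa [Real.sqrt_sq (by positivity)] at h4
    linarith
  -- summability of |v|
  have hsw2 : Summable (fun j : ℤ => ((1 + |(j:ℝ)|) ^ (-(r + 2*γ))) ^ 2) := by
    refine (aux_summable_weight (show 1/2 < r + 2*γ by linarith)).congr fun j => ?_
    rw [aux_rpow_sq (by positivity) (-(r + 2*γ))]
    congr 1
    ring
  have hsumu : Summable (fun j : ℤ => norm (v j)) := by
    have h := aux_summable_mul (a := fun j : ℤ => (1 + |(j:ℝ)|) ^ (-(r + 2*γ)))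
      (c := fun j : ℤ => (1 + |(j:ℝ)|) ^ (r + 2*γ) * norm (v j))
      (fun j => Real.rpow_nonneg (by positivity) _) (fun j => by positivity) hsw2 hv2
    refine h.congr fun j => ?_
    rw [← mul_assoc, ← Real.rpow_add (by positivity), neg_add_cancel,
      Real.rpow_zero, one_mul]
  have hS := aux_summable_F (τ := τ) v M hsumu hMb
  refine ⟨hS, ?_⟩
  -- unfold the norms
  simp only [wnorm]
  have hN1_0 : (0:ℝ) ≤ ∑' k : ℤ, (1 + |(k:ℝ)|) ^ (2*(r + γ)) * norm (v k) ^ 2 :=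
    tsum_nonneg fun k => by positivity
  have hN2_0 : (0:ℝ) ≤ ∑' k : ℤ, (1 + |(k:ℝ)|) ^ (2*(r + 2*γ)) * norm (v k) ^ 2 :=
    tsum_nonneg fun k => by positivity
  rw [Real.sq_sqrt hN1_0]
  set N1sq : ℝ := ∑' k : ℤ, (1 + |(k:ℝ)|) ^ (2*(r + γ)) * norm (v k) ^ 2 with hN1def
  set N2sq : ℝ := ∑' k : ℤ, (1 + |(k:ℝ)|) ^ (2*(r + 2*γ)) * norm (v k) ^ 2 with hN2def
  set RHS : ℝ := 48 * 3 ^ (r + γ) * Cr2 * τ ^ (1 + 2 * γ) * N1sq * Real.sqrt N2sq with hRHS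
  have hRHS0 : 0 ≤ RHS := by
    rw [hRHS]
    have : (0:ℝ) ≤ τ ^ (1 + 2*γ) := Real.rpow_nonneg hτ _
    have := Real.sqrt_nonneg N2sq
    positivity
  show Real.sqrt _ ≤ RHS
  -- reduce to squared inequality
  suffices hsq : (∑' k : ℤ, (1 + |(k:ℝ)|) ^ (2*r) *
      norm (∑' p : ℤ × ℤ,
        (∫ s in (0 : ℝ)..τ,
          (Complex.exp (2 * Complex.I * s * ((p.1 * k : ℤ) : ℂ)) - 1) *
          (Complex.exp (2 * Complex.I * s * ((p.2 * (k - p.1 - p.2) : ℤ) : ℂ)) - 1)) *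
        ((starRingEnd ℂ) (v p.1) * v p.2 * v (k - p.1 - p.2))) ^ 2) ≤ RHS ^ 2 by
    have := Real.sqrt_le_sqrt hsq
    rwa [Real.sqrt_sq hRHS0] at this
  by_cases hTsum : Summable (fun k : ℤ => (1 + |(k:ℝ)|) ^ (2*r) *
      norm (∑' p : ℤ × ℤ,
        (∫ s in (0 : ℝ)..τ,
          (Complex.exp (2 * Complex.I * s * ((p.1 * k : ℤ) : ℂ)) - 1) *
          (Complex.exp (2 * Complex.I * s * ((p.2 * (k - p.1 - p.2) : ℤ) : ℂ)) - 1)) *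
        ((starRingEnd ℂ) (v p.1) * v p.2 * v (k - p.1 - p.2))) ^ 2)
  swap
  · rw [tsum_eq_zero_of_not_summable hTsum]
    exact sq_nonneg _
  -- ENNReal computation
  rw [← ENNReal.ofReal_le_ofReal_iff (sq_nonneg _)]
  rw [ENNReal.ofReal_tsum_of_nonneg (fun k => by positivity) hTsum]
  -- names for the ENNReal sequences
  have hchain : (∑' k : ℤ, ENNReal.ofReal ((1 + |(k:ℝ)|) ^ (2*r) *
      norm (∑' p : ℤ × ℤ,
        (∫ s in (0 : ℝ)..τ,
          (Complex.exp (2 * Complex.I * s * ((p.1 * k : ℤ) : ℂ)) - 1) *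
          (Complex.exp (2 * Complex.I * s * ((p.2 * (k - p.1 - p.2) : ℤ) : ℂ)) - 1)) *
        ((starRingEnd ℂ) (v p.1) * v p.2 * v (k - p.1 - p.2))) ^ 2))
      ≤ ENNReal.ofReal ((48 * 3 ^ (r + γ) * τ ^ (1 + 2*γ)) ^ 2) *
        ((ENNReal.ofReal Cr2 * ENNReal.ofReal N1sq) *
          ((ENNReal.ofReal Cr2 * ENNReal.ofReal N1sq) * ENNReal.ofReal N2sq)) := by
    have hB2 : (∑' j : ℤ, ENNReal.ofReal ((1 + |(j:ℝ)|) ^ γ * norm (v j))) ^ 2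
        ≤ ENNReal.ofReal Cr2 * ENNReal.ofReal N1sq := by
      have hfg : ∀ j : ℤ, ENNReal.ofReal ((1 + |(j:ℝ)|) ^ (-r)) *
          ENNReal.ofReal ((1 + |(j:ℝ)|) ^ (r + γ) * norm (v j))
            = ENNReal.ofReal ((1 + |(j:ℝ)|) ^ γ * norm (v j)) := by
        intro j
        rw [← ENNReal.ofReal_mul (Real.rpow_nonneg (by positivity) _), ← mul_assoc,
          ← Real.rpow_add (by positivity)]
        norm_num
      have hcs := aux_cs (fun j : ℤ => ENNReal.ofReal ((1 + |(j:ℝ)|) ^ (-r)))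
        (fun j : ℤ => ENNReal.ofReal ((1 + |(j:ℝ)|) ^ (r + γ) * norm (v j)))
      simp only [hfg] at hcs
      refine hcs.trans (le_of_eq ?_)
      have hCr2E : (∑' j : ℤ, ENNReal.ofReal ((1 + |(j:ℝ)|) ^ (-r)) ^ 2)
          = ENNReal.ofReal Cr2 := by
        calc ∑' j : ℤ, ENNReal.ofReal ((1 + |(j:ℝ)|) ^ (-r)) ^ 2
            = ∑' j : ℤ, ENNReal.ofReal (((1 + |(j:ℝ)|) ^ (-r)) ^ 2) :=
              tsum_congr fun j =>
                (ENNReal.ofReal_pow (Real.rpow_nonneg (by positivity) _) 2).symm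
          _ = ENNReal.ofReal Cr2 := by
              rw [hCr2def, ENNReal.ofReal_tsum_of_nonneg (fun j => sq_nonneg _) hsqw]
      have hN1E : (∑' j : ℤ, ENNReal.ofReal ((1 + |(j:ℝ)|) ^ (r + γ) *
          norm (v j)) ^ 2) = ENNReal.ofReal N1sq := by
        calc ∑' j : ℤ, ENNReal.ofReal ((1 + |(j:ℝ)|) ^ (r + γ) * norm (v j)) ^ 2
            = ∑' j : ℤ, ENNReal.ofReal ((1 + |(j:ℝ)|) ^ (2*(r + γ)) *
                norm (v j) ^ 2) := by
              refine tsum_congr fun j => ?_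
              rw [← ENNReal.ofReal_pow (by positivity), mul_pow,
                aux_rpow_sq (by positivity : (0:ℝ) ≤ 1 + |(j:ℝ)|) (r + γ)]
          _ = ENNReal.ofReal N1sq := by
              rw [hN1def, ENNReal.ofReal_tsum_of_nonneg (fun j => by positivity) hv1]
      rw [hCr2E, hN1E]
    have hS2E : (∑' j : ℤ, (ENNReal.ofReal ((1 + |(j:ℝ)|) ^ (r + 2*γ) *
        norm (v j))) ^ 2) = ENNReal.ofReal N2sq := by
      calc ∑' j : ℤ, ENNReal.ofReal ((1 + |(j:ℝ)|) ^ (r + 2*γ) * norm (v j)) ^ 2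
          = ∑' j : ℤ, ENNReal.ofReal ((1 + |(j:ℝ)|) ^ (2*(r + 2*γ)) *
              norm (v j) ^ 2) := by
            refine tsum_congr fun j => ?_
            rw [← ENNReal.ofReal_pow (by positivity), mul_pow,
              aux_rpow_sq (by positivity : (0:ℝ) ≤ 1 + |(j:ℝ)|) (r + 2*γ)]
        _ = ENNReal.ofReal N2sq := by
            rw [hN2def, ENNReal.ofReal_tsum_of_nonneg (fun j => by positivity) hv]
    calc (∑' k : ℤ, ENNReal.ofReal ((1 + |(k:ℝ)|) ^ (2*r) *
        norm (∑' p : ℤ × ℤ,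
          (∫ s in (0 : ℝ)..τ,
            (Complex.exp (2 * Complex.I * s * ((p.1 * k : ℤ) : ℂ)) - 1) *
            (Complex.exp (2 * Complex.I * s * ((p.2 * (k - p.1 - p.2) : ℤ) : ℂ)) - 1)) *
          ((starRingEnd ℂ) (v p.1) * v p.2 * v (k - p.1 - p.2))) ^ 2))
        = ∑' k : ℤ, (ENNReal.ofReal ((1 + |(k:ℝ)|) ^ r *
            norm (∑' p : ℤ × ℤ,
          (∫ s in (0 : ℝ)..τ,
            (Complex.exp (2 * Complex.I * s * ((p.1 * k : ℤ) : ℂ)) - 1) *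
            (Complex.exp (2 * Complex.I * s * ((p.2 * (k - p.1 - p.2) : ℤ) : ℂ)) - 1)) *
          ((starRingEnd ℂ) (v p.1) * v p.2 * v (k - p.1 - p.2))))) ^ 2 := by
          refine tsum_congr fun k => ?_
          rw [← ENNReal.ofReal_pow (by positivity), mul_pow,
            aux_rpow_sq (by positivity : (0:ℝ) ≤ 1 + |(k:ℝ)|) r]
      _ ≤ ∑' k : ℤ, (ENNReal.ofReal (48 * 3 ^ (r + γ) * τ ^ (1 + 2*γ)) *
            ∑' p : ℤ × ℤ,
              ENNReal.ofReal ((1 + |(p.1:ℝ)|) ^ γ * norm (v p.1)) *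
              ENNReal.ofReal ((1 + |(p.2:ℝ)|) ^ γ * norm (v p.2)) *
              ENNReal.ofReal ((1 + |((k - p.1 - p.2 : ℤ):ℝ)|) ^ (r + 2*γ) *
                norm (v (k - p.1 - p.2)))) ^ 2 := by
          refine ENNReal.tsum_le_tsum fun k => ?_
          exact pow_le_pow_left' (aux_key hr h0 h1 hτ v k (hS k)) 2
      _ = ENNReal.ofReal (48 * 3 ^ (r + γ) * τ ^ (1 + 2*γ)) ^ 2 *
          ∑' k : ℤ, (∑' p : ℤ × ℤ,
              ENNReal.ofReal ((1 + |(p.1:ℝ)|) ^ γ * norm (v p.1)) *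
              ENNReal.ofReal ((1 + |(p.2:ℝ)|) ^ γ * norm (v p.2)) *
              ENNReal.ofReal ((1 + |((k - p.1 - p.2 : ℤ):ℝ)|) ^ (r + 2*γ) *
                norm (v (k - p.1 - p.2)))) ^ 2 := by
          rw [← ENNReal.tsum_mul_left]
          refine tsum_congr fun k => ?_
          rw [mul_pow]
      _ ≤ ENNReal.ofReal (48 * 3 ^ (r + γ) * τ ^ (1 + 2*γ)) ^ 2 *
          ((∑' j : ℤ, ENNReal.ofReal ((1 + |(j:ℝ)|) ^ γ * norm (v j))) ^ 2 *
            ((∑' j : ℤ, ENNReal.ofReal ((1 + |(j:ℝ)|) ^ γ * norm (v j))) ^ 2 *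
              ∑' j : ℤ, (ENNReal.ofReal ((1 + |(j:ℝ)|) ^ (r + 2*γ) *
                norm (v j))) ^ 2)) :=
          mul_le_mul_right (aux_core
            (fun j : ℤ => ENNReal.ofReal ((1 + |(j:ℝ)|) ^ γ * norm (v j)))
            (fun j : ℤ => ENNReal.ofReal ((1 + |(j:ℝ)|) ^ (r + 2*γ) * norm (v j)))) _
      _ ≤ ENNReal.ofReal (48 * 3 ^ (r + γ) * τ ^ (1 + 2*γ)) ^ 2 *
          ((ENNReal.ofReal Cr2 * ENNReal.ofReal N1sq) *
            ((ENNReal.ofReal Cr2 * ENNReal.ofReal N1sq) * ENNReal.ofReal N2sq)) := by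
          rw [hS2E]
          exact mul_le_mul_right (mul_le_mul' hB2 (mul_le_mul' hB2 le_rfl)) _
      _ = ENNReal.ofReal ((48 * 3 ^ (r + γ) * τ ^ (1 + 2*γ)) ^ 2) *
          ((ENNReal.ofReal Cr2 * ENNReal.ofReal N1sq) *
            ((ENNReal.ofReal Cr2 * ENNReal.ofReal N1sq) * ENNReal.ofReal N2sq)) := by
          rw [ENNReal.ofReal_pow (by positivity)]
  refine hchain.trans (le_of_eq ?_)
  have hτ' : (0:ℝ) ≤ τ ^ (1 + 2*γ) := Real.rpow_nonneg hτ _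
  have hN1_0' : (0:ℝ) ≤ N1sq := hN1_0
  have hN2_0' : (0:ℝ) ≤ N2sq := hN2_0
  rw [← ENNReal.ofReal_mul hCr2_pos.le,
    ← ENNReal.ofReal_mul (mul_nonneg hCr2_pos.le hN1_0'),
    ← ENNReal.ofReal_mul (mul_nonneg hCr2_pos.le hN1_0'),
    ← ENNReal.ofReal_mul (by positivity : (0:ℝ) ≤ (48 * 3 ^ (r + γ) * τ ^ (1 + 2 * γ)) ^ 2)]
  congr 1
  rw [hRHS]
  have hsq2 : Real.sqrt N2sq ^ 2 = N2sq := Real.sq_sqrt hN2_0'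
  have expand : (48 * 3 ^ (r + γ) * Cr2 * τ ^ (1 + 2 * γ) * N1sq * Real.sqrt N2sq) ^ 2
      = (48 * 3 ^ (r + γ) * τ ^ (1 + 2 * γ)) ^ 2 *
        (Cr2 * N1sq * (Cr2 * N1sq * (Real.sqrt N2sq ^ 2))) := by ring
  rw [expand, hsq2]
end

section
/- Let d ≥ 1 be an integer, let j ∈ {1,…,d}, let τ > 0, let x ∈ ℝ^d, and let w, v : ℤ^d → ℂ be sequences with Σ_{κ∈ℤ^d} |w_κ| < ∞ and Σ_{λ∈ℤ^d} |v_λ| < ∞. Then Σ_{κ,λ∈ℤ^d} w_κ v_λ e^{i(κ+λ)·x} ∫₀^τ e^{2is κ_j λ_j} ds = (i/2) Σ_{κ,λ∈ℤ^d: κ_j≠0, λ_j≠0} w_κ v_λ e^{i(κ+λ)·x} (e^{2iτ κ_j λ_j} − 1) / ((i κ_j)(i λ_j)) + τ [ v(x) W_j(x) + w(x) V_j(x) − W_j(x) V_j(x) ], where w(x) = Σ_κ w_κ e^{iκ·x}, v(x) = Σ_λ v_λ e^{iλ·x}, W_j(x) = Σ_{κ: κ_j=0} w_κ e^{iκ·x},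 and V_j(x) = Σ_{λ: λ_j=0} v_λ e^{iλ·x}. (This is the resolved form, at the level of Fourier series, of the integral K_j(w,v) arising in the d-dimensional Fourier integrator; W_j and V_j are the zeroth modes of the partial Fourier transform in direction j.) -/
open Complex

lemma intlem (τ : ℝ) (m : ℤ) :
    (∫ s in (0 : ℝ)..τ, Complex.exp (2 * Complex.I * s * (m : ℂ)))
      = if m = 0 then (τ : ℂ) else
        (Complex.exp (2 * Complex.I * τ * (m : ℂ)) - 1) / (2 * Complex.I * (m : ℂ)) := by
  by_cases hm : m = 0
  · simp [hm]
  · have hm' : (m : ℂ) ≠ 0 := Int.cast_ne_zero.mpr hm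
    have hc : (2 * Complex.I * (m : ℂ)) ≠ 0 := by
      simp [Complex.I_ne_zero, hm']
    have : ∀ s : ℝ, Complex.exp (2 * Complex.I * s * (m : ℂ))
        = Complex.exp ((2 * Complex.I * (m : ℂ)) * s) := by
      intro s; ring_nf
    rw [if_neg hm]
    simp only [this]
    rw [integral_exp_mul_complex hc]
    rw [Complex.ofReal_zero, mul_zero, Complex.exp_zero]

lemma scalarlem (z a b : ℂ) (ha : a ≠ 0) (hb : b ≠ 0) :
    z / (2 * Complex.I * (a * b)) = Complex.I / 2 * (z / ((Complex.I * a) * (Complex.I * b))) := by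
  have hI0 := Complex.I_ne_zero
  field_simp

lemma expabs (r : ℝ) (m : ℤ) :
    ‖Complex.exp (2 * Complex.I * (r : ℂ) * (m : ℂ))‖ = 1 := by
  rw [Complex.norm_exp]
  have : (2 * Complex.I * (r : ℂ) * (m : ℂ)).re = 0 := by
    simp [Complex.mul_re, Complex.mul_im]
  rw [this, Real.exp_zero]

lemma aux8 {ι : Type*} (τ : ℝ) (w v : ι → ℂ) (e : ι → ℂ) (K : ι → ℤ)
    (he : ∀ c, ‖e c‖ = 1)
    (hw : Summable fun κ => ‖w κ‖)
    (hv : Summable fun l => ‖v l‖) :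
    ∑' p : ι × ι,
        w p.1 * v p.2 * (e p.1 * e p.2) *
          ∫ s in (0 : ℝ)..τ, Complex.exp (2 * Complex.I * s * ((K p.1 * K p.2 : ℤ) : ℂ))
    = (Complex.I / 2) * ∑' p : ι × ι,
        (if K p.1 = 0 ∨ K p.2 = 0 then 0 else
          w p.1 * v p.2 * (e p.1 * e p.2) *
            ((Complex.exp (2 * Complex.I * τ * ((K p.1 * K p.2 : ℤ) : ℂ)) - 1) /
              ((Complex.I * (K p.1 : ℂ)) * (Complex.I * (K p.2 : ℂ)))))
      + τ * ((∑' l, v l * e l) * (∑' κ, if K κ = 0 then w κ * e κ else 0)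
            + (∑' κ, w κ * e κ) * (∑' l, if K l = 0 then v l * e l else 0)
            - (∑' κ, if K κ = 0 then w κ * e κ else 0) *
              (∑' l, if K l = 0 then v l * e l else 0)) := by
  have hsF : Summable fun κ => ‖w κ * e κ‖ := by
    have h : ∀ κ, ‖w κ * e κ‖ = ‖w κ‖ := fun κ => by
      simp [norm_mul, he]
    simpa only [h] using hw
  have hsG : Summable fun l => ‖v l * e l‖ := by
    have h : ∀ l, ‖v l * e l‖ = ‖v l‖ := fun l => by
      simp [norm_mul, he]
    simpa only [h] using hv
  have hsF0 : Summable fun κ => ‖(if K κ = 0 then w κ * e κ else 0 : ℂ)‖ := by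
    refine Summable.of_nonneg_of_le (fun _ => norm_nonneg _) (fun κ => ?_) hsF
    split_ifs <;> simp
    positivity
  have hsG0 : Summable fun l => ‖(if K l = 0 then v l * e l else 0 : ℂ)‖ := by
    refine Summable.of_nonneg_of_le (fun _ => norm_nonneg _) (fun l => ?_) hsG
    split_ifs <;> simp
    positivity
  -- summability of the two pieces
  have hbdd : Summable (fun p : ι × ι => 2 * (‖w p.1‖ * ‖v p.2‖)) :=
    (hw.mul_of_nonneg hv (fun _ => norm_nonneg _) (fun _ => norm_nonneg _)).mul_left 2
  have hsg1 : Summable (fun p : ι × ι =>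
      if K p.1 = 0 ∨ K p.2 = 0 then 0 else
          w p.1 * v p.2 * (e p.1 * e p.2) *
            ((Complex.exp (2 * Complex.I * τ * ((K p.1 * K p.2 : ℤ) : ℂ)) - 1) /
              ((Complex.I * (K p.1 : ℂ)) * (Complex.I * (K p.2 : ℂ))))) := by
    refine Summable.of_norm_bounded hbdd (fun p => ?_)
    by_cases h : K p.1 = 0 ∨ K p.2 = 0
    · rw [if_pos h, norm_zero]
      positivity
    · push_neg at h
      obtain ⟨h1, h2⟩ := h
      rw [if_neg (by tauto)]
      have hm1 : (1 : ℝ) ≤ |(K p.1 : ℝ)| := by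
        rw [← Int.cast_abs]; exact_mod_cast Int.one_le_abs h1
      have hm2 : (1 : ℝ) ≤ |(K p.2 : ℝ)| := by
        rw [← Int.cast_abs]; exact_mod_cast Int.one_le_abs h2
      have hE : ‖Complex.exp (2 * Complex.I * τ * ((K p.1 * K p.2 : ℤ) : ℂ)) - 1‖ ≤ 2 := by
        calc ‖Complex.exp (2 * Complex.I * (τ:ℂ) * ((K p.1 * K p.2 : ℤ) : ℂ)) - 1‖
            ≤ ‖Complex.exp (2 * Complex.I * (τ:ℂ) * ((K p.1 * K p.2 : ℤ) : ℂ))‖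
              + ‖(1:ℂ)‖ := norm_sub_le _ 1
          _ = 2 := by rw [expabs τ (K p.1 * K p.2), norm_one]; norm_num
      have hnorm : ‖w p.1 * v p.2 * (e p.1 * e p.2) *
            ((Complex.exp (2 * Complex.I * τ * ((K p.1 * K p.2 : ℤ) : ℂ)) - 1) /
              ((Complex.I * (K p.1 : ℂ)) * (Complex.I * (K p.2 : ℂ))))‖
          = ‖w p.1‖ * ‖v p.2‖ *
            (‖Complex.exp (2 * Complex.I * τ * ((K p.1 * K p.2 : ℤ) : ℂ)) - 1‖ /
              (|(K p.1 : ℝ)| * |(K p.2 : ℝ)|)) := by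
        simp only [norm_mul, norm_div, he, Complex.norm_I,
          Complex.norm_intCast, one_mul, mul_one]
      rw [hnorm]
      have hden : (1:ℝ) ≤ |(K p.1 : ℝ)| * |(K p.2 : ℝ)| := one_le_mul_of_one_le_of_one_le hm1 hm2
      have hq : ‖Complex.exp (2 * Complex.I * τ * ((K p.1 * K p.2 : ℤ) : ℂ)) - 1‖
          / (|(K p.1 : ℝ)| * |(K p.2 : ℝ)|) ≤ 2 := by
        rw [div_le_iff₀ (by linarith)]
        nlinarith
      calc ‖w p.1‖ * ‖v p.2‖ * _
          ≤ ‖w p.1‖ * ‖v p.2‖ * 2 :=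
            mul_le_mul_of_nonneg_left hq (by positivity)
        _ = 2 * (‖w p.1‖ * ‖v p.2‖) := by ring
  have hsu : Summable (fun p : ι × ι =>
      if K p.1 = 0 ∨ K p.2 = 0 then (w p.1 * e p.1) * (v p.2 * e p.2) else 0) := by
    refine Summable.of_norm_bounded (g := fun p : ι × ι => ‖w p.1 * e p.1‖ * ‖v p.2 * e p.2‖)
      ((hsF.mul_norm hsG).congr (fun p => by rw [norm_mul])) (fun p => ?_)
    by_cases h : K p.1 = 0 ∨ K p.2 = 0
    · rw [if_pos h, norm_mul]
    · rw [if_neg h, norm_zero]; positivity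
  -- pointwise identity
  have key : ∀ p : ι × ι,
      w p.1 * v p.2 * (e p.1 * e p.2) *
          ∫ s in (0 : ℝ)..τ, Complex.exp (2 * Complex.I * s * ((K p.1 * K p.2 : ℤ) : ℂ))
      = Complex.I / 2 *
          (if K p.1 = 0 ∨ K p.2 = 0 then 0 else
            w p.1 * v p.2 * (e p.1 * e p.2) *
              ((Complex.exp (2 * Complex.I * τ * ((K p.1 * K p.2 : ℤ) : ℂ)) - 1) /
                ((Complex.I * (K p.1 : ℂ)) * (Complex.I * (K p.2 : ℂ)))))
        + (τ : ℂ) * (if K p.1 = 0 ∨ K p.2 = 0 then (w p.1 * e p.1) * (v p.2 * e p.2) else 0) := by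
    intro p
    rw [intlem]
    by_cases h : K p.1 = 0 ∨ K p.2 = 0
    · rw [if_pos (mul_eq_zero.mpr h), if_pos h, if_pos h]
      ring
    · push_neg at h
      obtain ⟨h1, h2⟩ := h
      have h' : ¬(K p.1 = 0 ∨ K p.2 = 0) := by tauto
      rw [if_neg (mul_ne_zero h1 h2), if_neg h', if_neg h']
      have ha : ((K p.1 : ℤ) : ℂ) ≠ 0 := Int.cast_ne_zero.mpr h1
      have hb : ((K p.2 : ℤ) : ℂ) ≠ 0 := Int.cast_ne_zero.mpr h2
      push_cast
      rw [scalarlem _ _ _ ha hb]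
      ring
  rw [tsum_congr key, Summable.tsum_add (hsg1.mul_left _) (hsu.mul_left _), tsum_mul_left, tsum_mul_left]
  have hdecomp : ∀ p : ι × ι,
      (if K p.1 = 0 ∨ K p.2 = 0 then (w p.1 * e p.1) * (v p.2 * e p.2) else 0)
      = (if K p.1 = 0 then w p.1 * e p.1 else 0) * (v p.2 * e p.2)
        + (w p.1 * e p.1) * (if K p.2 = 0 then v p.2 * e p.2 else 0)
        - (if K p.1 = 0 then w p.1 * e p.1 else 0) * (if K p.2 = 0 then v p.2 * e p.2 else 0) := by
    intro p
    by_cases h1 : K p.1 = 0 <;> by_cases h2 : K p.2 = 0 <;> simp [h1, h2] <;> ring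
  have s1 : Summable (fun p : ι × ι =>
      (if K p.1 = 0 then w p.1 * e p.1 else 0) * (v p.2 * e p.2)) :=
    summable_mul_of_summable_norm (f := fun κ => if K κ = 0 then w κ * e κ else 0)
      (g := fun l => v l * e l) hsF0 hsG
  have s2 : Summable (fun p : ι × ι =>
      (w p.1 * e p.1) * (if K p.2 = 0 then v p.2 * e p.2 else 0)) :=
    summable_mul_of_summable_norm (f := fun κ => w κ * e κ)
      (g := fun l => if K l = 0 then v l * e l else 0) hsF hsG0
  have s3 : Summable (fun p : ι × ι =>
      (if K p.1 = 0 then w p.1 * e p.1 else 0) * (if K p.2 = 0 then v p.2 * e p.2 else 0)) :=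
    summable_mul_of_summable_norm (f := fun κ => if K κ = 0 then w κ * e κ else 0)
      (g := fun l => if K l = 0 then v l * e l else 0) hsF0 hsG0
  have huu : (∑' p : ι × ι,
        if K p.1 = 0 ∨ K p.2 = 0 then (w p.1 * e p.1) * (v p.2 * e p.2) else 0)
      = (∑' l, v l * e l) * (∑' κ, if K κ = 0 then w κ * e κ else 0)
        + (∑' κ, w κ * e κ) * (∑' l, if K l = 0 then v l * e l else 0)
        - (∑' κ, if K κ = 0 then w κ * e κ else 0) * (∑' l, if K l = 0 then v l * e l else 0) := by
    rw [tsum_congr hdecomp, Summable.tsum_sub (s1.add s2) s3, Summable.tsum_add s1 s2,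
      ← tsum_mul_tsum_of_summable_norm hsF0 hsG, ← tsum_mul_tsum_of_summable_norm hsF hsG0,
      ← tsum_mul_tsum_of_summable_norm hsF0 hsG0]
    ring
  rw [huu]

theorem stmt8 (d : ℕ) (hd : 1 ≤ d) (j : Fin d) (τ : ℝ) (hτ : 0 < τ) (x : Fin d → ℝ)
    (w v : (Fin d → ℤ) → ℂ)
    (hw : Summable fun κ : Fin d → ℤ => ‖w κ‖)
    (hv : Summable fun l : Fin d → ℤ => ‖v l‖) :
    ∑' p : (Fin d → ℤ) × (Fin d → ℤ),
        w p.1 * v p.2 *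
          Complex.exp (Complex.I * ((∑ i, ((p.1 i + p.2 i : ℤ) : ℝ) * x i : ℝ) : ℂ)) *
          ∫ s in (0 : ℝ)..τ, Complex.exp (2 * Complex.I * s * ((p.1 j * p.2 j : ℤ) : ℂ))
    = (Complex.I / 2) * ∑' p : (Fin d → ℤ) × (Fin d → ℤ),
        (if p.1 j = 0 ∨ p.2 j = 0 then 0 else
          w p.1 * v p.2 *
            Complex.exp (Complex.I * ((∑ i, ((p.1 i + p.2 i : ℤ) : ℝ) * x i : ℝ) : ℂ)) *
            ((Complex.exp (2 * Complex.I * τ * ((p.1 j * p.2 j : ℤ) : ℂ)) - 1) /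
              ((Complex.I * (p.1 j : ℂ)) * (Complex.I * (p.2 j : ℂ)))))
      + τ * ((∑' l : Fin d → ℤ, v l * Complex.exp (Complex.I * ((∑ i, (l i : ℝ) * x i : ℝ) : ℂ))) *
              (∑' κ : Fin d → ℤ, if κ j = 0 then
                w κ * Complex.exp (Complex.I * ((∑ i, (κ i : ℝ) * x i : ℝ) : ℂ)) else 0)
            + (∑' κ : Fin d → ℤ, w κ * Complex.exp (Complex.I * ((∑ i, (κ i : ℝ) * x i : ℝ) : ℂ))) *
              (∑' l : Fin d → ℤ, if l j = 0 then
                v l * Complex.exp (Complex.I * ((∑ i, (l i : ℝ) * x i : ℝ) : ℂ)) else 0)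
            - (∑' κ : Fin d → ℤ, if κ j = 0 then
                w κ * Complex.exp (Complex.I * ((∑ i, (κ i : ℝ) * x i : ℝ) : ℂ)) else 0) *
              (∑' l : Fin d → ℤ, if l j = 0 then
                v l * Complex.exp (Complex.I * ((∑ i, (l i : ℝ) * x i : ℝ) : ℂ)) else 0)) := by
  have he : ∀ c : Fin d → ℤ,
      ‖Complex.exp (Complex.I * ((∑ i, (c i : ℝ) * x i : ℝ) : ℂ))‖ = 1 := by
    intro c
    rw [Complex.norm_exp]
    simp
  have hexp : ∀ a b : Fin d → ℤ,
      Complex.exp (Complex.I * ((∑ i, ((a i + b i : ℤ) : ℝ) * x i : ℝ) : ℂ))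
      = Complex.exp (Complex.I * ((∑ i, (a i : ℝ) * x i : ℝ) : ℂ)) *
        Complex.exp (Complex.I * ((∑ i, (b i : ℝ) * x i : ℝ) : ℂ)) := by
    intro a b
    rw [← Complex.exp_add]
    congr 1
    have hs : (∑ i, ((a i + b i : ℤ) : ℝ) * x i)
        = (∑ i, (a i : ℝ) * x i) + (∑ i, (b i : ℝ) * x i) := by
      rw [← Finset.sum_add_distrib]
      refine Finset.sum_congr rfl fun i _ => ?_
      push_cast
      ring
    rw [hs]
    push_cast
    ring
  have h1 : (∑' p : (Fin d → ℤ) × (Fin d → ℤ),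
        w p.1 * v p.2 *
          Complex.exp (Complex.I * ((∑ i, ((p.1 i + p.2 i : ℤ) : ℝ) * x i : ℝ) : ℂ)) *
          ∫ s in (0 : ℝ)..τ, Complex.exp (2 * Complex.I * s * ((p.1 j * p.2 j : ℤ) : ℂ)))
      = ∑' p : (Fin d → ℤ) × (Fin d → ℤ),
        w p.1 * v p.2 *
          (Complex.exp (Complex.I * ((∑ i, (p.1 i : ℝ) * x i : ℝ) : ℂ)) *
            Complex.exp (Complex.I * ((∑ i, (p.2 i : ℝ) * x i : ℝ) : ℂ))) *
          ∫ s in (0 : ℝ)..τ, Complex.exp (2 * Complex.I * s * ((p.1 j * p.2 j : ℤ) : ℂ)) :=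
    tsum_congr fun p => by rw [hexp p.1 p.2]
  have h2 : (∑' p : (Fin d → ℤ) × (Fin d → ℤ),
        (if p.1 j = 0 ∨ p.2 j = 0 then 0 else
          w p.1 * v p.2 *
            Complex.exp (Complex.I * ((∑ i, ((p.1 i + p.2 i : ℤ) : ℝ) * x i : ℝ) : ℂ)) *
            ((Complex.exp (2 * Complex.I * τ * ((p.1 j * p.2 j : ℤ) : ℂ)) - 1) /
              ((Complex.I * (p.1 j : ℂ)) * (Complex.I * (p.2 j : ℂ))))))
      = ∑' p : (Fin d → ℤ) × (Fin d → ℤ),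
        (if p.1 j = 0 ∨ p.2 j = 0 then 0 else
          w p.1 * v p.2 *
            (Complex.exp (Complex.I * ((∑ i, (p.1 i : ℝ) * x i : ℝ) : ℂ)) *
              Complex.exp (Complex.I * ((∑ i, (p.2 i : ℝ) * x i : ℝ) : ℂ))) *
            ((Complex.exp (2 * Complex.I * τ * ((p.1 j * p.2 j : ℤ) : ℂ)) - 1) /
              ((Complex.I * (p.1 j : ℂ)) * (Complex.I * (p.2 j : ℂ))))) :=
    tsum_congr fun p => by rw [hexp p.1 p.2]
  rw [h1, h2]
  exact aux8 τ w v (fun c => Complex.exp (Complex.I * ((∑ i, (c i : ℝ) * x i : ℝ) : ℂ)))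
    (fun c => c j) he hw hv
end
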